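/- For all integers l ≥ 4, k ≥ 1, and r with 1 ≤ r ≤ k, one has (−1)^r · H^{(l)}_k(2·cos(r·π/(k+1))) > 0; that is, the sign of H^{(l)}_k evaluated at X_r := 2·cos(r·π/(k+1)) equals (−1)^r. -/

import Mathlib

/-- `PU n` is the real polynomial with `PU 0 = 0`, `PU 1 = 1` and the Chebyshev recursion
`PU (n+1) = X * PU n - PU (n-1)`; equivalently `PU n x = U (n-1) (x/2)` where `U` is
Mathlib's integer-indexed Chebyshev polynomial of the second kind. -/
noncomputable def PU (n : ℤ) : Polynomial ℝ :=
  (Polynomial.Chebyshev.U ℝ (n - 1)).comp (Polynomial.C (1 / 2) * Polynomial.X)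

/-- `Hpoly l k`, the paper's closed formula for the hook-transpose series
`P^{(l+1,1)^T}_{l+4+k}`:
`PU (k+5) - 2(l-1) PU (k+4) + l(l-5) PU (k+3) + 3l(l-1) PU (k+2)
  + 2(l²-2l-1) PU (k+1) + l(l-1) PU k - (l+1) PU (k-1)`. -/
noncomputable def Hpoly (l : ℤ) (k : ℤ) : Polynomial ℝ :=
  PU (k + 5) - Polynomial.C (2 * ((l : ℝ) - 1)) * PU (k + 4)
    + Polynomial.C ((l : ℝ) * ((l : ℝ) - 5)) * PU (k + 3)
    + Polynomial.C (3 * (l : ℝ) * ((l : ℝ) - 1)) * PU (k + 2)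
    + Polynomial.C (2 * ((l : ℝ) ^ 2 - 2 * (l : ℝ) - 1)) * PU (k + 1)
    + Polynomial.C ((l : ℝ) * ((l : ℝ) - 1)) * PU k
    - Polynomial.C ((l : ℝ) + 1) * PU (k - 1)

lemma PU_eval_cos (n : ℤ) (θ : ℝ) :
    (PU n).eval (2 * Real.cos θ) * Real.sin θ = Real.sin (n * θ) := by
  have h := Polynomial.Chebyshev.U_real_cos θ (n - 1)
  simp only [PU, Polynomial.eval_comp, Polynomial.eval_mul, Polynomial.eval_C,
    Polynomial.eval_X]
  have hx : (1 / 2 : ℝ) * (2 * Real.cos θ) = Real.cos θ := by ring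
  rw [hx, h]
  norm_num

set_option maxHeartbeats 1000000 in
/-- for integers `l ≥ 4`, `k ≥ 1` and `1 ≤ r ≤ k`, the sign of
`Hpoly l k` at `2 cos (r π / (k+1))` is `(-1)^r`. -/
theorem stmt14 (l : ℤ) (hl : 4 ≤ l) (k : ℕ) (hk : 1 ≤ k) (r : ℕ)
    (hr1 : 1 ≤ r) (hr2 : r ≤ k) :
    0 < (-1 : ℝ) ^ r * (Hpoly l k).eval (2 * Real.cos (r * Real.pi / (k + 1))) := by
  set θ : ℝ := r * Real.pi / (k + 1) with hθ
  have hk1 : (0 : ℝ) < (k : ℝ) + 1 := by positivity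
  have hθpos : 0 < θ := by
    apply div_pos _ hk1
    have : (0:ℝ) < (r:ℝ) := by exact_mod_cast hr1
    positivity
  have hθlt : θ < Real.pi := by
    rw [hθ, div_lt_iff₀ hk1]
    have hrk : (r : ℝ) ≤ (k : ℝ) := by exact_mod_cast hr2
    nlinarith [Real.pi_pos]
  set s : ℝ := Real.sin θ with hsdef
  set c : ℝ := Real.cos θ with hcdef
  have hs : 0 < s := Real.sin_pos_of_pos_of_lt_pi hθpos hθlt
  have hc1 : c ≤ 1 := Real.cos_le_one θ
  have hc2 : -1 < c := by
    have h := Real.cos_lt_cos_of_nonneg_of_le_pi (le_of_lt hθpos) le_rfl hθlt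
    simpa [Real.cos_pi, hcdef] using h
  have hpy : s ^ 2 + c ^ 2 = 1 := Real.sin_sq_add_cos_sq θ
  have hkθ : ((k : ℝ) + 1) * θ = r * Real.pi := by
    rw [hθ, mul_div_assoc']; exact mul_div_cancel_left₀ _ hk1.ne'
  -- sin of shifted multiples
  have hsinpi : Real.sin (r * Real.pi) = 0 := Real.sin_nat_mul_pi r
  have hcospi : Real.cos (r * Real.pi) = (-1) ^ r := by
    have := Real.cos_nat_mul_pi_sub 0 r
    simpa using this
  have key : ∀ m : ℝ, Real.sin (((k : ℝ) + 1 + m) * θ) = (-1) ^ r * Real.sin (m * θ) := by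
    intro m
    have : ((k : ℝ) + 1 + m) * θ = r * Real.pi + m * θ := by
      rw [← hkθ]; ring
    rw [this, Real.sin_add, hsinpi, hcospi]; ring
  -- multiple angle formulas
  have hs2 : Real.sin (2 * θ) = 2 * s * c := Real.sin_two_mul θ
  have hc2θ : Real.cos (2 * θ) = 2 * c ^ 2 - 1 := by
    rw [Real.cos_two_mul]
  have hs3 : Real.sin (3 * θ) = s * (4 * c ^ 2 - 1) := by
    have : (3 : ℝ) * θ = 2 * θ + θ := by ring
    rw [this, Real.sin_add, hs2, hc2θ]; ring
  have hc3θ : Real.cos (3 * θ) = 4 * c ^ 3 - 3 * c := by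
    have : (3 : ℝ) * θ = 2 * θ + θ := by ring
    rw [this, Real.cos_add, hs2, hc2θ]
    nlinarith [hpy]
  have hs4 : Real.sin (4 * θ) = s * (8 * c ^ 3 - 4 * c) := by
    have : (4 : ℝ) * θ = 3 * θ + θ := by ring
    rw [this, Real.sin_add, hs3, hc3θ]
    nlinarith [hpy]
  have hs1 : Real.sin (1 * θ) = s := by rw [one_mul]
  have hs0 : Real.sin (0 * θ) = 0 := by simp
  have hsm1 : Real.sin ((-1) * θ) = -s := by
    rw [neg_one_mul, Real.sin_neg]
  have hsm2 : Real.sin ((-2) * θ) = -(2 * s * c) := by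
    have : (-2 : ℝ) * θ = -(2 * θ) := by ring
    rw [this, Real.sin_neg, hs2]
  -- evaluate Hpoly
  have heval : (Hpoly l k).eval (2 * c) * s =
      Real.sin (((k:ℝ) + 5) * θ) - 2 * ((l:ℝ) - 1) * Real.sin (((k:ℝ) + 4) * θ)
      + (l:ℝ) * ((l:ℝ) - 5) * Real.sin (((k:ℝ) + 3) * θ)
      + 3 * (l:ℝ) * ((l:ℝ) - 1) * Real.sin (((k:ℝ) + 2) * θ)
      + 2 * ((l:ℝ) ^ 2 - 2 * (l:ℝ) - 1) * Real.sin (((k:ℝ) + 1) * θ)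
      + (l:ℝ) * ((l:ℝ) - 1) * Real.sin ((k:ℝ) * θ)
      - ((l:ℝ) + 1) * Real.sin (((k:ℝ) - 1) * θ) := by
    have e5 := PU_eval_cos ((k : ℤ) + 5) θ
    have e4 := PU_eval_cos ((k : ℤ) + 4) θ
    have e3 := PU_eval_cos ((k : ℤ) + 3) θ
    have e2 := PU_eval_cos ((k : ℤ) + 2) θ
    have e1 := PU_eval_cos ((k : ℤ) + 1) θ
    have e0 := PU_eval_cos (k : ℤ) θ
    have em1 := PU_eval_cos ((k : ℤ) - 1) θ
    push_cast at e5 e4 e3 e2 e1 e0 em1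
    simp only [Hpoly, Polynomial.eval_add, Polynomial.eval_sub, Polynomial.eval_mul,
      Polynomial.eval_C]
    simp only [← hsdef, ← hcdef] at e5 e4 e3 e2 e1 e0 em1
    linear_combination e5 - 2 * ((l:ℝ) - 1) * e4 + (l:ℝ) * ((l:ℝ) - 5) * e3
      + 3 * (l:ℝ) * ((l:ℝ) - 1) * e2 + 2 * ((l:ℝ) ^ 2 - 2 * (l:ℝ) - 1) * e1
      + (l:ℝ) * ((l:ℝ) - 1) * e0 - ((l:ℝ) + 1) * em1
  set ε : ℝ := (-1 : ℝ) ^ r with hεdef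
  have hε : ε * ε = 1 := by
    rw [hεdef, ← pow_add]
    simp [pow_add, pow_mul, neg_one_sq, ← two_mul, pow_mul]
  have E5 : ε * Real.sin (((k:ℝ) + 5) * θ) = s * (8 * c ^ 3 - 4 * c) := by
    rw [show ((k:ℝ) + 5) * θ = ((k:ℝ) + 1 + 4) * θ by ring, key 4, ← mul_assoc, hε, one_mul, hs4]
  have E4 : ε * Real.sin (((k:ℝ) + 4) * θ) = s * (4 * c ^ 2 - 1) := by
    rw [show ((k:ℝ) + 4) * θ = ((k:ℝ) + 1 + 3) * θ by ring, key 3, ← mul_assoc, hε, one_mul, hs3]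
  have E3 : ε * Real.sin (((k:ℝ) + 3) * θ) = 2 * s * c := by
    rw [show ((k:ℝ) + 3) * θ = ((k:ℝ) + 1 + 2) * θ by ring, key 2, ← mul_assoc, hε, one_mul, hs2]
  have E2 : ε * Real.sin (((k:ℝ) + 2) * θ) = s := by
    rw [show ((k:ℝ) + 2) * θ = ((k:ℝ) + 1 + 1) * θ by ring, key 1, ← mul_assoc, hε, one_mul, hs1]
  have E1 : ε * Real.sin (((k:ℝ) + 1) * θ) = 0 := by
    rw [show ((k:ℝ) + 1) * θ = ((k:ℝ) + 1 + 0) * θ by ring, key 0, ← mul_assoc, hε, one_mul, hs0]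
  have E0 : ε * Real.sin ((k:ℝ) * θ) = -s := by
    rw [show (k:ℝ) * θ = ((k:ℝ) + 1 + (-1)) * θ by ring, key (-1), ← mul_assoc, hε, one_mul, hsm1]
  have Em1 : ε * Real.sin (((k:ℝ) - 1) * θ) = -(2 * s * c) := by
    rw [show ((k:ℝ) - 1) * θ = ((k:ℝ) + 1 + (-2)) * θ by ring, key (-2), ← mul_assoc, hε, one_mul, hsm2]
  have hfin : ε * ((Hpoly l k).eval (2 * c) * s) =
      2 * s * ((c + 1) * ((2 * c - (l:ℝ) + 1) * (2 * c - (l:ℝ) - 1))) := by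
    rw [heval]
    linear_combination E5 - 2 * ((l:ℝ) - 1) * E4 + (l:ℝ) * ((l:ℝ) - 5) * E3
      + 3 * (l:ℝ) * ((l:ℝ) - 1) * E2 + 2 * ((l:ℝ) ^ 2 - 2 * (l:ℝ) - 1) * E1
      + (l:ℝ) * ((l:ℝ) - 1) * E0 - ((l:ℝ) + 1) * Em1
  have hlr : (4 : ℝ) ≤ (l : ℝ) := by exact_mod_cast hl
  have hpos : 0 < ε * ((Hpoly l k).eval (2 * c) * s) := by
    rw [hfin]
    have h1 : 0 < c + 1 := by linarith
    have h2 : 2 * c - (l:ℝ) + 1 < 0 := by linarith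
    have h3 : 2 * c - (l:ℝ) - 1 < 0 := by linarith
    have := mul_pos_of_neg_of_neg h2 h3
    positivity
  nlinarith [hpos, hs]
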